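/- For every n ≥ 1 and every z in the closed unit disk, |V_n(z) - √(1-z)| ≤ (2/√(πn))·|z|^{n+1}; consequently V_n converges uniformly on the closed unit disk to √(1-z). -/

import Mathlib

set_option maxHeartbeats 1000000

noncomputable def Vc (z : ℂ) : ℕ → ℂ
  | 0 => 1
  | n + 1 => (1 - z + Vc z n) / (1 + Vc z n)


lemma geom_bound (t : ℝ) (ht0 : 0 ≤ t) (ht1 : t ≤ 1) (n : ℕ) :
    (n + 1 : ℝ) * t ^ n * (1 - t) ≤ 1 - t ^ (n + 1) := by
  induction n with
  | zero => simp
  | succ k ih =>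
    have h3 : t ^ (k + 1) ≤ 1 := pow_le_one₀ ht0 ht1
    have h2' : t * ((k + 1 : ℝ) * t ^ k * (1 - t)) ≤ t - t ^ (k + 2) := by
      calc t * ((k + 1 : ℝ) * t ^ k * (1 - t)) ≤ t * (1 - t ^ (k + 1)) :=
            mul_le_mul_of_nonneg_left ih ht0
        _ = t - t ^ (k + 2) := by ring
    have h5 : t ^ (k + 1) * (1 - t) ≤ 1 - t := by
      nlinarith [mul_nonneg (sub_nonneg.2 h3) (sub_nonneg.2 ht1)]
    have goal2 : ((k : ℝ) + 1 + 1) * t ^ (k + 1) * (1 - t) ≤ 1 - t ^ (k + 2) := by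
      calc ((k : ℝ) + 1 + 1) * t ^ (k + 1) * (1 - t)
          = t * ((k + 1 : ℝ) * t ^ k * (1 - t)) + t ^ (k + 1) * (1 - t) := by ring
        _ ≤ (t - t ^ (k + 2)) + (1 - t) := add_le_add h2' h5
        _ = 1 - t ^ (k + 2) := by ring
    push_cast
    convert goal2 using 2 <;> norm_num

lemma key (n : ℕ) (hn : 1 ≤ n) (a b t p : ℝ) (ha : 0 < a) (hb : b ^ 2 ≤ a ^ 2)
    (hp : p = (1 + a) ^ 2 + b ^ 2) (ht : t ^ 2 * p = (1 - a) ^ 2 + b ^ 2) (ht0 : 0 ≤ t) :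
    2 * Real.sqrt 2 * a * Real.sqrt n ≤ (1 - t ^ (n + 1)) * p ^ (n + 1) := by
  have hb0 : 0 ≤ b ^ 2 := sq_nonneg b
  have hp1 : 1 ≤ p := by nlinarith
  have hp0 : 0 < p := by linarith
  have h4a : (1 - t ^ 2) * p = 4 * a := by nlinarith
  have ht2 : t ^ 2 < 1 := by nlinarith
  have ht1 : t < 1 := by nlinarith [sq_nonneg (t - 1)]
  set s := Real.sqrt n with hs
  have hs1 : 1 ≤ s := by
    rw [hs]; rw [show (1:ℝ) = Real.sqrt 1 by simp]
    exact Real.sqrt_le_sqrt (by exact_mod_cast hn)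
  have hs2 : s ^ 2 = n := Real.sq_sqrt (by positivity)
  have h2 : (Real.sqrt 2) ^ 2 = 2 := Real.sq_sqrt (by norm_num)
  have h2n : 0 ≤ Real.sqrt 2 := Real.sqrt_nonneg 2
  have hpn : ((1 + a) ^ 2) ^ n ≤ p ^ n := pow_le_pow_left₀ (by positivity) (by nlinarith) n
  by_cases hA : 1 / 2 ≤ a * s
  · -- case A
    have hts : t ^ (n + 1) ≤ t ^ 2 := pow_le_pow_of_le_one ht0 ht1.le (by omega)
    have hbern : 1 + (n : ℝ) * (2 * a) + 0 ≤ ((1 + a) ^ 2) ^ n := by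
      have := one_add_mul_le_pow (a := 2 * a + a ^ 2) (by nlinarith) n
      calc 1 + (n : ℝ) * (2 * a) + 0 ≤ 1 + (n : ℝ) * (2 * a + a ^ 2) := by
            have : (0:ℝ) ≤ (n : ℝ) * a ^ 2 := by positivity
            linarith
        _ ≤ (1 + (2 * a + a ^ 2)) ^ n := this
        _ = ((1 + a) ^ 2) ^ n := by ring_nf
    have key1 : 2 * Real.sqrt 2 * a * s ≤ 4 * a * p ^ n := by
      have hna : (n : ℝ) * a = s * (s * a) := by rw [← hs2]; ring
      nlinarith [hbern, hpn, mul_le_mul_of_nonneg_left hA (le_of_lt ha), sq_nonneg (Real.sqrt 2 - 3/2)]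
    calc 2 * Real.sqrt 2 * a * s ≤ 4 * a * p ^ n := key1
      _ = ((1 - t ^ 2) * p) * p ^ n := by rw [h4a]
      _ = (1 - t ^ 2) * p ^ (n + 1) := by ring
      _ ≤ (1 - t ^ (n + 1)) * p ^ (n + 1) := by
          apply mul_le_mul_of_nonneg_right (by linarith) (by positivity)
  · -- case B
    push_neg at hA
    have has : a * s ≤ 1 / 2 := hA.le
    have hna2 : (n : ℝ) * a ^ 2 ≤ 1 / 4 := by
      have h' : (a * s) * (a * s) ≤ (1/2) * (1/2) :=
        mul_le_mul has has (by positivity) (by norm_num)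
      nlinarith [h', hs2]
    have ha1 : a ≤ 1 / 2 := by nlinarith
    -- B1 : 2a(n+1) t^n p^n ≤ (1 - t^{n+1}) p^{n+1}
    have k1 : 2 * a ≤ (1 - t) * p := by nlinarith [mul_nonneg hp0.le (sq_nonneg (1 - t))]
    have hg := geom_bound t ht0 ht1.le n
    have htn : 0 ≤ t ^ n := pow_nonneg ht0 n
    have hpn0 : 0 ≤ p ^ n := pow_nonneg hp0.le n
    have B1 : 2 * a * ((n:ℝ) + 1) * (t ^ n * p ^ n) ≤ (1 - t ^ (n + 1)) * p ^ (n + 1) := by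
      calc 2 * a * ((n:ℝ) + 1) * (t ^ n * p ^ n)
          ≤ ((1 - t) * p) * ((n:ℝ) + 1) * (t ^ n * p ^ n) := by
            apply mul_le_mul_of_nonneg_right _ (by positivity)
            apply mul_le_mul_of_nonneg_right k1 (by positivity)
        _ = (((n:ℝ) + 1) * t ^ n * (1 - t)) * p ^ (n + 1) := by ring
        _ ≤ (1 - t ^ (n + 1)) * p ^ (n + 1) := by
            apply mul_le_mul_of_nonneg_right hg (by positivity)
    -- B2 : (1 - a^2)^n ≤ t^n p^n
    have ha2 : 0 ≤ 1 - a ^ 2 := by nlinarith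
    have B2 : (1 - a ^ 2) ^ n ≤ t ^ n * p ^ n := by
      have e1 : ((1 - a) ^ 2 * (1 + a) ^ 2) ^ n ≤ ((t ^ 2 * p) * p) ^ n := by
        apply pow_le_pow_left₀ (by positivity)
        apply mul_le_mul (by nlinarith) (by nlinarith) (by positivity) (by nlinarith)
      have r1 : ((1 - a ^ 2) ^ n) ^ 2 = ((1 - a) ^ 2 * (1 + a) ^ 2) ^ n := by
        rw [← pow_mul, mul_comm n 2, pow_mul]
        congr 1
        ring
      have r2 : ((t ^ 2 * p) * p) ^ n = (t ^ n * p ^ n) ^ 2 := by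
        rw [show t ^ 2 * p * p = (t * p) ^ 2 by ring, ← pow_mul, mul_comm 2 n, pow_mul, mul_pow]
      have e2 : ((1 - a ^ 2) ^ n) ^ 2 ≤ (t ^ n * p ^ n) ^ 2 := by
        rw [r1, ← r2]; exact e1
      exact le_of_sq_le_sq e2 (mul_nonneg htn hpn0)
    -- B3 : sqrt 2 * s ≤ (n+1) (1-a^2)^n
    have B3 : Real.sqrt 2 * s ≤ ((n:ℝ) + 1) * (1 - a ^ 2) ^ n := by
      have hasq : a ^ 2 ≤ 1 / 4 := by nlinarith [mul_le_mul ha1 ha1 ha.le (by norm_num : (0:ℝ) ≤ 1/2)]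
      have hbern2 : 1 + ((2 * n : ℕ) : ℝ) * (-(a ^ 2)) ≤ (1 + (-(a ^ 2))) ^ (2 * n) :=
        one_add_mul_le_pow (by nlinarith) (2 * n)
      have e3 : (1 : ℝ) / 2 ≤ ((1 - a ^ 2) ^ n) ^ 2 := by
        calc (1:ℝ)/2 ≤ 1 + ((2 * n : ℕ) : ℝ) * (-(a ^ 2)) := by push_cast; nlinarith
          _ ≤ (1 + (-(a ^ 2))) ^ (2 * n) := hbern2
          _ = ((1 - a ^ 2) ^ n) ^ 2 := by
              rw [show (1:ℝ) + -(a ^ 2) = 1 - a ^ 2 by ring, mul_comm 2 n, pow_mul]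
      have e4 : (Real.sqrt 2 * s) ^ 2 ≤ (((n:ℝ) + 1) * (1 - a ^ 2) ^ n) ^ 2 := by
        have : (Real.sqrt 2 * s) ^ 2 = 2 * (n : ℝ) := by rw [mul_pow, h2, hs2]
        rw [this]
        calc (2 : ℝ) * n ≤ ((n:ℝ) + 1) ^ 2 * (1/2) := by nlinarith [sq_nonneg ((n:ℝ) - 1)]
          _ ≤ ((n:ℝ) + 1) ^ 2 * ((1 - a ^ 2) ^ n) ^ 2 := by
              apply mul_le_mul_of_nonneg_left e3 (by positivity)
          _ = (((n:ℝ) + 1) * (1 - a ^ 2) ^ n) ^ 2 := by ring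
      exact le_of_sq_le_sq e4 (mul_nonneg (by positivity) (pow_nonneg ha2 n))
    calc 2 * Real.sqrt 2 * a * s = 2 * a * (Real.sqrt 2 * s) := by ring
      _ ≤ 2 * a * (((n:ℝ) + 1) * (1 - a ^ 2) ^ n) := by
          apply mul_le_mul_of_nonneg_left B3 (by positivity)
      _ = 2 * a * ((n:ℝ) + 1) * (1 - a ^ 2) ^ n := by ring
      _ ≤ 2 * a * ((n:ℝ) + 1) * (t ^ n * p ^ n) := by
          apply mul_le_mul_of_nonneg_left B2 (by positivity)
      _ ≤ (1 - t ^ (n + 1)) * p ^ (n + 1) := B1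

lemma normsq' (x : ℂ) : ‖x‖ ^ 2 = x.re ^ 2 + x.im ^ 2 := by
  rw [Complex.sq_norm, Complex.normSq_apply]; ring

lemma Vc_one (n : ℕ) : Vc 1 n = ((n : ℂ) + 1)⁻¹ := by
  induction n with
  | zero => simp [Vc]
  | succ k ih =>
    have hk : ((k : ℂ) + 1) ≠ 0 := Nat.cast_add_one_ne_zero k
    have hk2 : ((2 : ℂ) + (k : ℂ)) ≠ 0 := by
      have := Nat.cast_add_one_ne_zero (k + 1) (R := ℂ)
      push_cast at this
      intro h; apply this; rw [← h]; ring
    show (1 - 1 + Vc 1 k) / (1 + Vc 1 k) = _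
    rw [ih]
    push_cast
    rw [show ((k:ℂ) + 1 + 1) = (k:ℂ) + 2 by ring]
    field_simp
    ring

lemma main_bound (n : ℕ) (hn : 1 ≤ n) (z : ℂ) (hz : ‖z‖ ≤ 1) (hz1 : z ≠ 1) :
    ‖Vc z n - (1 - z) ^ ((1 : ℂ) / 2)‖ ≤
      2 / Real.sqrt (Real.pi * n) * ‖z‖ ^ (n + 1) := by
  have hC : 0 < Real.sqrt (Real.pi * n) := by
    apply Real.sqrt_pos.2
    have : (0:ℝ) < (n:ℝ) := by exact_mod_cast Nat.pos_of_ne_zero (by omega)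
    positivity
  set w := (1 - z) ^ ((1 : ℂ) / 2) with hw
  have h0 : (1 : ℂ) - z ≠ 0 := sub_ne_zero.2 (Ne.symm hz1)
  have hw2 : w * w = 1 - z := by
    rw [hw, ← Complex.cpow_add _ _ h0]
    norm_num
  -- Re w > 0
  have hzre : z.re ≤ 1 := by
    calc z.re ≤ |z.re| := le_abs_self _
      _ ≤ ‖z‖ := Complex.abs_re_le_norm z
      _ ≤ 1 := hz
  have hargne : (1 - z).arg ≠ Real.pi := by
    intro h
    rw [Complex.arg_eq_pi_iff] at h
    have hre : (1 - z).re = 1 - z.re := by simp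
    rw [hre] at h
    linarith [h.1]
  have harg : |(1 - z).arg| < Real.pi := by
    rw [abs_lt]
    exact ⟨Complex.neg_pi_lt_arg _, lt_of_le_of_ne (Complex.arg_le_pi _) hargne⟩
  have hargl := abs_lt.mp harg
  have ha : 0 < w.re := by
    have hwexp : w = Complex.exp (Complex.log (1 - z) * ((1:ℂ) / 2)) :=
      Complex.cpow_def_of_ne_zero h0 _
    have him : (Complex.log (1 - z) * ((1:ℂ) / 2)).im = (1 - z).arg / 2 := by
      rw [Complex.mul_im]
      simp [Complex.log_im]
      ring
    rw [hwexp, Complex.exp_re, him]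
    apply mul_pos (Real.exp_pos _)
    apply Real.cos_pos_of_mem_Ioo
    constructor
    · linarith [hargl.1, Real.pi_pos]
    · linarith [hargl.2, Real.pi_pos]
  -- imaginary part controlled by real part
  have hzeq : z = 1 - w * w := by rw [hw2]; ring
  have hwre : z.re = 1 - (w.re * w.re - w.im * w.im) := by
    have h' := congrArg Complex.re hzeq
    simpa [Complex.sub_re, Complex.mul_re] using h'
  have hb2 : w.im ^ 2 ≤ w.re ^ 2 := by nlinarith [hzre, hwre]
  -- setup rho, t, p
  have h1pw : (1 : ℂ) + w ≠ 0 := by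
    intro h
    have := congrArg Complex.re h
    simp [Complex.add_re] at this
    linarith
  set ρ := (1 - w) / (1 + w) with hρ
  have hρw : ρ * (1 + w) = 1 - w := div_mul_cancel₀ _ h1pw
  set t := ‖ρ‖ with hT
  set p := ‖(1 : ℂ) + w‖ ^ 2 with hP
  have ht0 : 0 ≤ t := norm_nonneg _
  have hp_eq : p = (1 + w.re) ^ 2 + w.im ^ 2 := by
    rw [hP, normsq']
    simp [Complex.add_re, Complex.add_im]
  have htp : t ^ 2 * p = (1 - w.re) ^ 2 + w.im ^ 2 := by
    have e : t ^ 2 * p = ‖ρ * (1 + w)‖ ^ 2 := by rw [norm_mul, mul_pow]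
    rw [e, hρw, normsq']
    simp [Complex.sub_re, Complex.sub_im]
  have hp0 : 0 < p := by nlinarith [sq_nonneg w.im]
  have ht1 : t < 1 := by
    have h1 : t ^ 2 * p < p := by nlinarith [sq_nonneg w.im]
    have h2 : t ^ 2 < 1 := by
      by_contra hcon
      push_neg at hcon
      nlinarith
    nlinarith [sq_nonneg (t - 1)]
  have hzρ : z = ρ * (1 + w) ^ 2 := by
    have e : ρ * (1 + w) ^ 2 = (1 - w) * (1 + w) := by
      rw [sq, ← mul_assoc, hρw]
    rw [e]
    linear_combination hw2
  have hznorm : ‖z‖ = t * p := by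
    rw [hzρ, norm_mul, norm_pow, hT, hP]
  -- 1 - rho^k nonzero
  have hne : ∀ k : ℕ, 1 ≤ k → (1 : ℂ) - ρ ^ k ≠ 0 := by
    intro k hk h
    rw [sub_eq_zero] at h
    have h2 : ‖ρ ^ k‖ < 1 := by
      rw [norm_pow]
      calc t ^ k ≤ t ^ 1 := pow_le_pow_of_le_one ht0 ht1.le hk
        _ = t := pow_one t
        _ < 1 := ht1
    rw [← h] at h2
    simp at h2
  -- the identity
  have hid : ∀ m : ℕ, Vc z m = w * (1 + ρ ^ (m + 1)) / (1 - ρ ^ (m + 1)) := by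
    intro m
    induction m with
    | zero =>
      have hne1 : (1 : ℂ) - ρ ≠ 0 := by
        have := hne 1 le_rfl; rwa [pow_one] at this
      have key0 : 1 - ρ = w * (1 + ρ) := by
        rw [hρ]
        field_simp
        ring
      show (1 : ℂ) = _
      rw [pow_one, eq_div_iff hne1, one_mul, key0]
    | succ m ih =>
      have h1r : (1 : ℂ) - ρ ^ (m + 1) ≠ 0 := hne (m + 1) (by omega)
      have h2r : (1 : ℂ) - ρ ^ (m + 2) ≠ 0 := hne (m + 2) (by omega)
      have hrρ : ρ ^ (m + 2) = ρ ^ (m + 1) * ρ := pow_succ ρ (m + 1)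
      have h2r' : (1 : ℂ) - ρ ^ (m + 1) * ρ ≠ 0 := by rwa [hrρ] at h2r
      have e1 : 1 + Vc z m = (1 + w) * (1 - ρ ^ (m + 1) * ρ) / (1 - ρ ^ (m + 1)) := by
        rw [ih]
        field_simp
        linear_combination (ρ ^ (m + 1)) * hρw
      have e2 : 1 - z + Vc z m = w * (1 + w) * (1 + ρ ^ (m + 1) * ρ) / (1 - ρ ^ (m + 1)) := by
        rw [ih, ← hw2]
        field_simp
        linear_combination (- (w * ρ ^ (m + 1))) * hρw
      show (1 - z + Vc z m) / (1 + Vc z m) = _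
      rw [e1, e2, hrρ]
      field_simp
  -- error formula
  have h1r : (1 : ℂ) - ρ ^ (n + 1) ≠ 0 := hne (n + 1) (by omega)
  have herr : Vc z n - w = 2 * w * ρ ^ (n + 1) / (1 - ρ ^ (n + 1)) := by
    rw [hid n]
    field_simp
    ring
  -- KEY real inequality
  have hkey := key n hn w.re w.im t p ha hb2 hp_eq htp ht0
  have hwa : ‖w‖ ≤ Real.sqrt 2 * w.re := by
    apply le_of_sq_le_sq _ (by positivity)
    rw [mul_pow, Real.sq_sqrt (by norm_num : (0:ℝ) ≤ 2), normsq']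
    linarith
  have hsqpin : Real.sqrt (Real.pi * n) ≤ 2 * Real.sqrt n := by
    rw [Real.sqrt_mul Real.pi_pos.le]
    apply mul_le_mul_of_nonneg_right _ (Real.sqrt_nonneg _)
    calc Real.sqrt Real.pi ≤ Real.sqrt 4 := Real.sqrt_le_sqrt Real.pi_le_four
      _ = 2 := by
        rw [show (4:ℝ) = 2 ^ 2 by norm_num, Real.sqrt_sq (by norm_num : (0:ℝ) ≤ 2)]
  have combined : ‖w‖ * Real.sqrt (Real.pi * n) ≤ (1 - t ^ (n + 1)) * p ^ (n + 1) := by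
    calc ‖w‖ * Real.sqrt (Real.pi * n) ≤ (Real.sqrt 2 * w.re) * (2 * Real.sqrt n) := by
          apply mul_le_mul hwa hsqpin (Real.sqrt_nonneg _) (by positivity)
      _ = 2 * Real.sqrt 2 * w.re * Real.sqrt n := by ring
      _ ≤ (1 - t ^ (n + 1)) * p ^ (n + 1) := hkey
  have hApos : (0:ℝ) < 1 - t ^ (n + 1) := by
    have : t ^ (n + 1) < 1 := pow_lt_one₀ ht0 ht1 (by omega)
    linarith
  have hBnorm : (1:ℝ) - t ^ (n + 1) ≤ ‖(1 : ℂ) - ρ ^ (n + 1)‖ := by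
    calc (1:ℝ) - t ^ (n + 1) = ‖(1:ℂ)‖ - ‖ρ ^ (n + 1)‖ := by
          rw [norm_pow, norm_one, hT]
      _ ≤ ‖(1 : ℂ) - ρ ^ (n + 1)‖ := norm_sub_norm_le _ _
  have hBpos : (0:ℝ) < ‖(1 : ℂ) - ρ ^ (n + 1)‖ := lt_of_lt_of_le hApos hBnorm
  rw [herr]
  have hlhs : ‖2 * w * ρ ^ (n + 1) / (1 - ρ ^ (n + 1))‖
      = 2 * ‖w‖ * t ^ (n + 1) / ‖(1 : ℂ) - ρ ^ (n + 1)‖ := by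
    rw [norm_div, norm_mul, norm_mul, norm_pow, hT]
    norm_num
  rw [hlhs, hznorm]
  rw [div_le_iff₀ hBpos]
  have hmain : 2 * ‖w‖ * t ^ (n + 1) * Real.sqrt (Real.pi * n)
      ≤ 2 / Real.sqrt (Real.pi * n) * (t * p) ^ (n + 1) * ‖(1 : ℂ) - ρ ^ (n + 1)‖
        * Real.sqrt (Real.pi * n) := by
    have htn : (0:ℝ) ≤ t ^ (n + 1) := pow_nonneg ht0 _
    have step1 : 2 * ‖w‖ * t ^ (n + 1) * Real.sqrt (Real.pi * n)
        = 2 * t ^ (n + 1) * (‖w‖ * Real.sqrt (Real.pi * n)) := by ring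
    have step2 : 2 / Real.sqrt (Real.pi * n) * (t * p) ^ (n + 1) * ‖(1 : ℂ) - ρ ^ (n + 1)‖
        * Real.sqrt (Real.pi * n) = 2 * t ^ (n + 1) * (p ^ (n + 1) * ‖(1 : ℂ) - ρ ^ (n + 1)‖) := by
      rw [mul_pow]
      field_simp
    rw [step1, step2]
    apply mul_le_mul_of_nonneg_left _ (by positivity)
    calc ‖w‖ * Real.sqrt (Real.pi * n) ≤ (1 - t ^ (n + 1)) * p ^ (n + 1) := combined
      _ ≤ ‖(1 : ℂ) - ρ ^ (n + 1)‖ * p ^ (n + 1) := by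
          apply mul_le_mul_of_nonneg_right hBnorm (by positivity)
      _ = p ^ (n + 1) * ‖(1 : ℂ) - ρ ^ (n + 1)‖ := by ring
  have := le_of_mul_le_mul_right (by linarith [hmain] :
    2 * ‖w‖ * t ^ (n + 1) * Real.sqrt (Real.pi * n)
      ≤ 2 / Real.sqrt (Real.pi * n) * (t * p) ^ (n + 1) * ‖(1 : ℂ) - ρ ^ (n + 1)‖
        * Real.sqrt (Real.pi * n)) hC
  exact this


theorem stmt18 :
    (∀ n : ℕ, 1 ≤ n → ∀ z : ℂ, ‖z‖ ≤ 1 →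
      ‖Vc z n - (1 - z) ^ ((1 : ℂ) / 2)‖ ≤
        2 / Real.sqrt (Real.pi * n) * ‖z‖ ^ (n + 1)) ∧
    TendstoUniformlyOn (fun n z => Vc z n) (fun z => (1 - z) ^ ((1 : ℂ) / 2))
      Filter.atTop (Metric.closedBall 0 1) := by
  have part1 : ∀ n : ℕ, 1 ≤ n → ∀ z : ℂ, ‖z‖ ≤ 1 →
      ‖Vc z n - (1 - z) ^ ((1 : ℂ) / 2)‖ ≤
        2 / Real.sqrt (Real.pi * n) * ‖z‖ ^ (n + 1) := by
    intro n hn z hz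
    by_cases hz1 : z = 1
    · subst hz1
      have hC : 0 < Real.sqrt (Real.pi * n) := by
        apply Real.sqrt_pos.2
        have : (0:ℝ) < (n:ℝ) := by exact_mod_cast Nat.pos_of_ne_zero (by omega)
        positivity
      rw [Vc_one]
      simp only [sub_self]
      rw [Complex.zero_cpow (by norm_num : (1:ℂ)/2 ≠ 0), sub_zero]
      have hnorm : ‖((n:ℂ) + 1)⁻¹‖ = ((n:ℝ) + 1)⁻¹ := by
        rw [norm_inv]
        congr 1
        rw [show ((n:ℂ) + 1) = ((n + 1 : ℕ) : ℂ) by push_cast; ring, Complex.norm_natCast]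
        push_cast
        ring
      rw [hnorm, norm_one, one_pow, mul_one]
      have hup : Real.sqrt (Real.pi * n) ≤ 2 * ((n:ℝ) + 1) := by
        calc Real.sqrt (Real.pi * n) ≤ Real.sqrt ((2 * ((n:ℝ) + 1)) ^ 2) := by
              apply Real.sqrt_le_sqrt
              have h4 : Real.pi ≤ 4 := Real.pi_le_four
              have hn0 : (0:ℝ) ≤ (n:ℝ) := Nat.cast_nonneg n
              nlinarith
          _ = 2 * ((n:ℝ) + 1) := Real.sqrt_sq (by positivity)
      rw [inv_eq_one_div, div_le_div_iff₀ (by positivity) hC]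
      linarith
    · exact main_bound n hn z hz hz1
  refine ⟨part1, ?_⟩
  rw [Metric.tendstoUniformlyOn_iff]
  intro ε hε
  obtain ⟨n₀, hn₀⟩ : ∃ n₀ : ℕ, (2 / ε) ^ 2 < (n₀ : ℝ) := exists_nat_gt _
  filter_upwards [Filter.eventually_ge_atTop (max n₀ 1)] with n hn z hzmem
  have h2 : 1 ≤ n := le_trans (le_max_right _ _) hn
  have hn' : n₀ ≤ n := le_trans (le_max_left _ _) hn
  have hnn : (2 / ε) ^ 2 < (n : ℝ) := lt_of_lt_of_le hn₀ (by exact_mod_cast hn')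
  have hsq : 2 / ε < Real.sqrt (Real.pi * n) := by
    have h1 : 2 / ε < Real.sqrt n := by
      rw [show (2 / ε : ℝ) = Real.sqrt ((2 / ε) ^ 2) from
        (Real.sqrt_sq (by positivity)).symm]
      exact Real.sqrt_lt_sqrt (by positivity) hnn
    have h2 : Real.sqrt (n : ℝ) ≤ Real.sqrt (Real.pi * n) := by
      apply Real.sqrt_le_sqrt
      nlinarith [Real.pi_gt_three, Nat.cast_nonneg (α := ℝ) n]
    linarith
  have h1 : 2 / Real.sqrt (Real.pi * n) < ε := by
    have hCpos : 0 < Real.sqrt (Real.pi * n) := lt_trans (by positivity) hsq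
    rw [div_lt_iff₀ hCpos]
    rw [div_lt_iff₀ hε] at hsq
    linarith

  have hz : ‖z‖ ≤ 1 := by simpa using hzmem
  rw [dist_comm, dist_eq_norm]
  calc ‖Vc z n - (1 - z) ^ ((1:ℂ)/2)‖
      ≤ 2 / Real.sqrt (Real.pi * n) * ‖z‖ ^ (n + 1) := part1 n h2 z hz
    _ ≤ 2 / Real.sqrt (Real.pi * n) * 1 := by
        apply mul_le_mul_of_nonneg_left (pow_le_one₀ (norm_nonneg z) hz) (by positivity)
    _ = 2 / Real.sqrt (Real.pi * n) := mul_one _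
    _ < ε := h1
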